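/- arXiv:0812.1627 — 4 statements merged into one kernel-verified Lean document; each statement's English description precedes it below -/
import Mathlib

section
/- Let α ∈ ℝ, let v_l, v_r be periodic stationary solutions with constant α, and let U be a shock profile connecting v_l to v_r. Assume that ā_r := ∫₀¹ ∂_v A(y, v_r(y)) dy < 0. Then for every a ∈ (0, −ā_r) there exists a constant C_a > 0 such that |U(y) − v_r(y)| ≤ C_a · exp(−a y) for all y ≥ 0. -/
open MeasureTheory Filter Set Topology

/-- A periodic stationary solution of the viscous conservation law, with
constant `α`. -/
def PerStat (A : ℝ → ℝ → ℝ) (α : ℝ) (v : ℝ → ℝ) : Prop :=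
  ContDiff ℝ 1 v ∧ (∀ x, v (x + 1) = v x) ∧ ∀ x, deriv v x = A x (v x) - α

/-- A shock profile connecting `vl` to `vr`, with constant `α`. -/
def ShockProfile (A : ℝ → ℝ → ℝ) (α : ℝ) (vl vr U : ℝ → ℝ) : Prop :=
  ContDiff ℝ 1 U ∧ (∀ x, deriv U x = A x (U x) - α) ∧
  Filter.Tendsto (fun x => U x - vl x) Filter.atBot (nhds 0) ∧
  Filter.Tendsto (fun x => U x - vr x) Filter.atTop (nhds 0)

/-- Partial derivative of `A` in its second variable, as a function of the pair. -/
noncomputable def pd (A : ℝ → ℝ → ℝ) : ℝ × ℝ → ℝ :=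
  fun p => fderiv ℝ (Function.uncurry A) p (0, 1)

lemma pd_hasDerivAt {A : ℝ → ℝ → ℝ} (hA : ContDiff ℝ 1 (Function.uncurry A))
    (t v : ℝ) : HasDerivAt (fun w => A t w) (pd A (t, v)) v := by
  have h := (hA.differentiable one_ne_zero (t, v)).hasFDerivAt
  have hc : HasDerivAt (fun w : ℝ => ((t, w) : ℝ × ℝ)) (0, 1) v :=
    (hasDerivAt_const v t).prodMk (hasDerivAt_id v)
  exact h.comp_hasDerivAt v hc

lemma pd_continuous {A : ℝ → ℝ → ℝ} (hA : ContDiff ℝ 1 (Function.uncurry A)) :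
    Continuous (pd A) :=
  (hA.continuous_fderiv one_ne_zero).clm_apply continuous_const

lemma pd_periodic {A : ℝ → ℝ → ℝ} (hA : ContDiff ℝ 1 (Function.uncurry A))
    (hper : ∀ y v, A (y + 1) v = A y v) (t v : ℝ) : pd A (t + 1, v) = pd A (t, v) := by
  have h1 : (fun w => A (t+1) w) = fun w => A t w := funext fun w => hper t w
  have := (pd_hasDerivAt hA (t+1) v).deriv
  rw [h1] at this
  rw [← this, (pd_hasDerivAt hA t v).deriv]

/-- Mean value theorem in integral form. -/
lemma mvt_int {A : ℝ → ℝ → ℝ} (hA : ContDiff ℝ 1 (Function.uncurry A))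
    (t v z : ℝ) :
    A t (v + z) - A t v = (∫ s in (0:ℝ)..1, pd A (t, v + s * z)) * z := by
  have hg : ∀ s ∈ Set.uIcc (0:ℝ) 1, HasDerivAt (fun s => A t (v + s * z))
      (pd A (t, v + s * z) * z) s := by
    intro s _
    have h1 : HasDerivAt (fun s : ℝ => v + s * z) z s := by
      simpa using ((hasDerivAt_id s).mul_const z).const_add v
    exact (pd_hasDerivAt hA t (v + s * z)).comp s h1
  have hcont : Continuous fun s => pd A (t, v + s * z) * z :=
    ((pd_continuous hA).comp (by fun_prop)).mul continuous_const
  have := intervalIntegral.integral_eq_sub_of_hasDerivAt hg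
    (hcont.intervalIntegrable 0 1)
  simp only [one_mul, zero_mul, add_zero] at this
  rw [← this, intervalIntegral.integral_mul_const]

/-- Representation of solutions of a scalar linear ODE. -/
lemma ode_repr {w c : ℝ → ℝ} (hc : Continuous c)
    (hw : ∀ t, HasDerivAt w (c t * w t) t) (x : ℝ) :
    w x = w 0 * Real.exp (∫ t in (0:ℝ)..x, c t) := by
  set G : ℝ → ℝ := fun x => ∫ t in (0:ℝ)..x, c t with hGdef
  have hG : ∀ y, HasDerivAt G (c y) y := fun y =>
    intervalIntegral.integral_hasDerivAt_right (hc.intervalIntegrable 0 y)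
      (hc.stronglyMeasurableAtFilter _ _) hc.continuousAt
  have hH : ∀ y, HasDerivAt (fun y => w y * Real.exp (-G y)) 0 y := by
    intro y
    have h1 : HasDerivAt (fun y => Real.exp (-G y)) (Real.exp (-G y) * (-c y)) y :=
      ((hG y).neg).exp
    have := (hw y).mul h1
    exact this.congr_deriv (by ring)
  have hconst : ∀ y z : ℝ, w y * Real.exp (-G y) = w z * Real.exp (-G z) :=
    fun y z => is_const_of_deriv_eq_zero (fun u => (hH u).differentiableAt)
      (fun u => (hH u).deriv) y z
  have h0 : G 0 = 0 := intervalIntegral.integral_same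
  have := hconst x 0
  rw [h0, neg_zero, Real.exp_zero, mul_one] at this
  rw [← this, Real.exp_neg]
  field_simp
  rfl

lemma per_bound {P : ℝ → ℝ} (hP : Function.Periodic P 1) (hPc : Continuous P) :
    ∃ M : ℝ, ∀ x, |P x| ≤ M := by
  obtain ⟨C, hC⟩ := isBounded_iff_forall_norm_le.mp
    (hP.isBounded_of_continuous one_ne_zero hPc)
  exact ⟨C, fun x => hC (P x) (Set.mem_range_self x)⟩

/-- Uniform closeness of the averaged coefficient to the periodic one for large times. -/
lemma pd_close {A : ℝ → ℝ → ℝ} (hA : ContDiff ℝ 1 (Function.uncurry A))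
    (hperA : ∀ t v, pd A (t + 1, v) = pd A (t, v))
    {vr w : ℝ → ℝ} {R₀ : ℝ} (hvrb : ∀ t, |vr t| ≤ R₀)
    (hw0 : Filter.Tendsto w Filter.atTop (nhds 0))
    {ε : ℝ} (hε : 0 < ε) :
    ∃ T : ℝ, 0 ≤ T ∧ ∀ t, T ≤ t → ∀ s ∈ Set.Icc (0:ℝ) 1,
      |pd A (t, vr t + s * w t) - pd A (t, vr t)| ≤ ε := by
  have hK : IsCompact ((Set.Icc (0:ℝ) 1) ×ˢ (Set.Icc (-(R₀+1)) (R₀+1))) :=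
    isCompact_Icc.prod isCompact_Icc
  have hUC := hK.uniformContinuousOn_of_continuous (pd_continuous hA).continuousOn
  rw [Metric.uniformContinuousOn_iff] at hUC
  obtain ⟨δ, hδ, hδ'⟩ := hUC ε hε
  set δ' : ℝ := min (δ/2) 1 with hδ'def
  have hδ'pos : 0 < δ' := lt_min (by linarith) one_pos
  obtain ⟨N, hN⟩ := (Metric.tendsto_atTop.mp hw0) δ' hδ'pos
  refine ⟨max N 0, le_max_right _ _, fun t ht s hs => ?_⟩
  have hwt : |w t| ≤ δ' := by
    have := hN t (le_trans (le_max_left _ _) ht)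
    rw [Real.dist_eq, sub_zero] at this; exact this.le
  have hfr : ∀ v : ℝ, pd A (Int.fract t, v) = pd A (t, v) := by
    intro v
    have hp : Function.Periodic (fun u => pd A (u, v)) 1 := fun u => hperA u v
    have h2 := hp.sub_int_mul_eq (x := t) ⌊t⌋
    have h3 : Int.fract t = t - (⌊t⌋ : ℝ) * 1 := by rw [mul_one]; rfl
    rw [h3]; exact h2
  rw [← hfr, ← hfr (vr t)]
  have hswt : |s * w t| ≤ δ' := by
    rw [abs_mul]
    calc |s| * |w t| ≤ 1 * |w t| := by
          apply mul_le_mul_of_nonneg_right _ (abs_nonneg _)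
          rw [abs_le]; constructor <;> [linarith [hs.1]; exact hs.2]
      _ ≤ δ' := by rw [one_mul]; exact hwt
  have hvrt := hvrb t
  have hR₀ : 0 ≤ R₀ := le_trans (abs_nonneg _) (hvrb 0)
  have hmem1 : (Int.fract t, vr t + s * w t) ∈
      (Set.Icc (0:ℝ) 1) ×ˢ (Set.Icc (-(R₀+1)) (R₀+1)) := by
    constructor
    · exact ⟨Int.fract_nonneg t, (Int.fract_lt_one t).le⟩
    · have h1 : |vr t + s * w t| ≤ R₀ + 1 := by
        calc |vr t + s * w t| ≤ |vr t| + |s * w t| := abs_add_le _ _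
          _ ≤ R₀ + 1 := add_le_add hvrt (le_trans hswt (min_le_right _ _))
      rw [abs_le] at h1; exact ⟨h1.1, h1.2⟩
  have hmem2 : (Int.fract t, vr t) ∈
      (Set.Icc (0:ℝ) 1) ×ˢ (Set.Icc (-(R₀+1)) (R₀+1)) := by
    constructor
    · exact ⟨Int.fract_nonneg t, (Int.fract_lt_one t).le⟩
    · rw [Set.mem_Icc, ← abs_le]; linarith
  have hdist : dist ((Int.fract t, vr t + s * w t) : ℝ × ℝ) (Int.fract t, vr t) < δ := by
    rw [Prod.dist_eq]
    simp only [dist_self]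
    have : dist (vr t + s * w t) (vr t) = |s * w t| := by
      rw [Real.dist_eq]; ring_nf
    refine max_lt (by linarith) ?_
    rw [this]
    calc |s * w t| ≤ δ' := hswt
      _ ≤ δ / 2 := min_le_left _ _
      _ < δ := by linarith
  have := hδ' _ hmem1 _ hmem2 hdist
  rw [Real.dist_eq] at this
  exact this.le

/-- Bound on the primitive of a coefficient that is asymptotically close to a
periodic function. -/
lemma G_bound {b c : ℝ → ℝ} (hb : Continuous b) (hc : Continuous c)
    (hbper : Function.Periodic b 1) {ε T : ℝ} (hε : 0 ≤ ε) (hT : 0 ≤ T)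
    (hclose : ∀ t, T ≤ t → |c t - b t| ≤ ε) :
    ∃ K : ℝ, ∀ x, 0 ≤ x →
      (∫ t in (0:ℝ)..x, c t) ≤ ((∫ t in (0:ℝ)..1, b t) + ε) * x + K := by
  set abar : ℝ := ∫ t in (0:ℝ)..1, b t with habar
  set P : ℝ → ℝ := fun x => (∫ t in (0:ℝ)..x, b t) - abar * x with hPdef
  have hPper : Function.Periodic P 1 := by
    intro x
    have h1 := hbper.intervalIntegral_add_eq_add 0 x
      (fun t₁ t₂ => hb.intervalIntegrable t₁ t₂)
    simp only [zero_add] at h1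
    simp only [hPdef, h1]
    ring
  have hPc : Continuous P := by
    have : Continuous fun x => ∫ t in (0:ℝ)..x, b t :=
      intervalIntegral.continuous_primitive
        (fun t₁ t₂ => hb.intervalIntegrable t₁ t₂) 0
    fun_prop
  obtain ⟨M, hM⟩ := per_bound hPper hPc
  obtain ⟨S, hS⟩ := (isCompact_Icc (a := (0:ℝ)) (b := T)).exists_bound_of_continuousOn
    ((by fun_prop : Continuous fun t => c t - b t)).continuousOn
  have hS0 : 0 ≤ S := le_trans (norm_nonneg _) (hS 0 ⟨le_refl 0, hT⟩)
  refine ⟨M + S * T, fun x hx => ?_⟩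
  have hint1 : (∫ t in (0:ℝ)..x, c t) =
      (∫ t in (0:ℝ)..x, b t) + ∫ t in (0:ℝ)..x, (c t - b t) := by
    rw [← intervalIntegral.integral_add (hb.intervalIntegrable 0 x)
      (g := fun t => c t - b t) ((hc.sub hb).intervalIntegrable 0 x)]
    congr 1; ext t; ring
  have hbpart : (∫ t in (0:ℝ)..x, b t) ≤ abar * x + M := by
    have := hM x
    have h2 : P x ≤ M := (abs_le.mp this).2
    simp only [hPdef] at h2; linarith
  have hdpart : (∫ t in (0:ℝ)..x, (c t - b t)) ≤ S * T + ε * x := by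
    rcases le_total x T with hxT | hxT
    · have h3 : |∫ t in (0:ℝ)..x, (c t - b t)| ≤ S * |x - 0| := by
        rw [← Real.norm_eq_abs]
        apply intervalIntegral.norm_integral_le_of_norm_le_const
        intro t ht
        rw [Set.uIoc_of_le hx] at ht
        exact hS t ⟨ht.1.le, le_trans ht.2 hxT⟩
      rw [sub_zero, abs_of_nonneg hx] at h3
      have := (abs_le.mp h3).2
      nlinarith
    · have hsplit : (∫ t in (0:ℝ)..x, (c t - b t)) =
          (∫ t in (0:ℝ)..T, (c t - b t)) + ∫ t in T..x, (c t - b t) :=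
        (intervalIntegral.integral_add_adjacent_intervals
          ((hc.sub hb).intervalIntegrable 0 T)
          ((hc.sub hb).intervalIntegrable T x)).symm
      have h4 : |∫ t in (0:ℝ)..T, (c t - b t)| ≤ S * |T - 0| := by
        rw [← Real.norm_eq_abs]
        apply intervalIntegral.norm_integral_le_of_norm_le_const
        intro t ht
        rw [Set.uIoc_of_le hT] at ht
        exact hS t ⟨ht.1.le, ht.2⟩
      rw [sub_zero, abs_of_nonneg hT] at h4
      have h5 : |∫ t in T..x, (c t - b t)| ≤ ε * |x - T| := by
        rw [← Real.norm_eq_abs]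
        apply intervalIntegral.norm_integral_le_of_norm_le_const
        intro t ht
        rw [Set.uIoc_of_le hxT] at ht
        exact hclose t ht.1.le
      rw [abs_of_nonneg (by linarith : (0:ℝ) ≤ x - T)] at h5
      have h4' := (abs_le.mp h4).2
      have h5' := (abs_le.mp h5).2
      nlinarith
  calc (∫ t in (0:ℝ)..x, c t)
      = (∫ t in (0:ℝ)..x, b t) + ∫ t in (0:ℝ)..x, (c t - b t) := hint1
    _ ≤ (abar * x + M) + (S * T + ε * x) := add_le_add hbpart hdpart
    _ = (abar + ε) * x + (M + S * T) := by ring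

/-- exponential convergence of a shock profile towards its right
asymptotic state when `ā_r = ∫₀¹ ∂_v A(y, v_r(y)) dy < 0`. -/
theorem shock_profile_exponential_convergence
    (A : ℝ → ℝ → ℝ)
    (hA : ContDiff ℝ 1 (Function.uncurry A))
    (hper : ∀ y v, A (y + 1) v = A y v)
    (α : ℝ) (vl vr : ℝ → ℝ)
    (hvl : PerStat A α vl) (hvr : PerStat A α vr)
    (U : ℝ → ℝ) (hU : ShockProfile A α vl vr U)
    (har : (∫ y in (0:ℝ)..1, deriv (fun w => A y w) (vr y)) < 0) :
    ∀ a : ℝ, 0 < a → a < -(∫ y in (0:ℝ)..1, deriv (fun w => A y w) (vr y)) →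
      ∃ C : ℝ, 0 < C ∧ ∀ y : ℝ, 0 ≤ y →
        |U y - vr y| ≤ C * Real.exp (-a * y) := by
  intro a ha1 ha2
  obtain ⟨hUc1, hUde, _, hUtop⟩ := hU
  obtain ⟨hvrc1, hvrper, hvrde⟩ := hvr
  set w : ℝ → ℝ := fun x => U x - vr x with hwdef
  have hUcont : Continuous U := hUc1.continuous
  have hvrcont : Continuous vr := hvrc1.continuous
  -- derivative of w
  have hwderiv : ∀ x, HasDerivAt w (A x (U x) - A x (vr x)) x := by
    intro x
    have h1 : HasDerivAt U (A x (U x) - α) x := by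
      have := (hUc1.differentiable one_ne_zero x).hasDerivAt
      rwa [hUde x] at this
    have h2 : HasDerivAt vr (A x (vr x) - α) x := by
      have := (hvrc1.differentiable one_ne_zero x).hasDerivAt
      rwa [hvrde x] at this
    have := h1.sub h2
    exact this.congr_deriv (by ring)
  -- coefficient c
  set c : ℝ → ℝ := fun t => ∫ s in (0:ℝ)..1, pd A (t, vr t + s * w t) with hcdef
  have hccont : Continuous c := by
    apply intervalIntegral.continuous_parametric_intervalIntegral_of_continuous'
    exact (pd_continuous hA).comp (by fun_prop)
  -- b the periodic coefficient
  set b : ℝ → ℝ := fun t => pd A (t, vr t) with hbdef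
  have hbcont : Continuous b := (pd_continuous hA).comp (by fun_prop)
  have hbper : Function.Periodic b 1 := by
    intro t
    simp only [hbdef]
    rw [hvrper t, pd_periodic hA hper]
  -- har in terms of b
  have habar : (∫ y in (0:ℝ)..1, deriv (fun w => A y w) (vr y)) =
      ∫ t in (0:ℝ)..1, b t := by
    apply intervalIntegral.integral_congr
    intro y _
    exact (pd_hasDerivAt hA y (vr y)).deriv
  -- ODE satisfied by w
  have hwode : ∀ t, HasDerivAt w (c t * w t) t := by
    intro t
    have h1 := mvt_int hA t (vr t) (w t)
    have h2 : vr t + w t = U t := by simp [hwdef]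
    rw [h2] at h1
    have := hwderiv t
    rw [h1] at this
    simpa [hcdef, mul_comm] using this
  -- representation
  have hrepr : ∀ x, w x = w 0 * Real.exp (∫ t in (0:ℝ)..x, c t) :=
    ode_repr hccont hwode
  -- bound on vr
  obtain ⟨R₀, hR₀⟩ := per_bound hvrper hvrcont
  -- closeness
  set ε : ℝ := -(∫ t in (0:ℝ)..1, b t) - a with hεdef
  have hεpos : 0 < ε := by
    rw [habar] at ha2; simp only [hεdef]; linarith
  obtain ⟨T, hT0, hTclose⟩ := pd_close hA (pd_periodic hA hper) hR₀ hUtop hεpos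
  have hclose : ∀ t, T ≤ t → |c t - b t| ≤ ε := by
    intro t ht
    have hi1 : IntervalIntegrable (fun s => pd A (t, vr t + s * w t))
        MeasureTheory.volume 0 1 :=
      ((pd_continuous hA).comp
        (by fun_prop : Continuous fun s : ℝ => ((t, vr t + s * w t) : ℝ × ℝ))).intervalIntegrable 0 1
    have hsub : c t - b t = ∫ s in (0:ℝ)..1, (pd A (t, vr t + s * w t) - b t) := by
      rw [intervalIntegral.integral_sub hi1 intervalIntegrable_const]
      simp [hcdef]
    rw [hsub, ← Real.norm_eq_abs]
    have h6 : ‖∫ s in (0:ℝ)..1, (pd A (t, vr t + s * w t) - b t)‖ ≤ ε * |1 - 0| := by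
      apply intervalIntegral.norm_integral_le_of_norm_le_const
      intro s hs
      rw [Set.uIoc_of_le (zero_le_one)] at hs
      exact hTclose t ht s ⟨hs.1.le, hs.2⟩
    simpa using h6
  -- bound on the primitive of c
  obtain ⟨K, hK⟩ := G_bound hbcont hccont hbper hεpos.le hT0 hclose
  have hcoef : (∫ t in (0:ℝ)..1, b t) + ε = -a := by simp only [hεdef]; ring
  refine ⟨(|w 0| + 1) * Real.exp K, by positivity, fun y hy => ?_⟩
  have h7 : (∫ t in (0:ℝ)..y, c t) ≤ -a * y + K := by
    have := hK y hy
    rwa [hcoef] at this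
  calc |U y - vr y| = |w y| := rfl
    _ = |w 0| * Real.exp (∫ t in (0:ℝ)..y, c t) := by
        rw [hrepr y, abs_mul, abs_of_pos (Real.exp_pos _)]
    _ ≤ |w 0| * Real.exp (-a * y + K) := by
        apply mul_le_mul_of_nonneg_left (Real.exp_le_exp.mpr h7) (abs_nonneg _)
    _ = |w 0| * Real.exp K * Real.exp (-a * y) := by
        rw [Real.exp_add]; ring
    _ ≤ (|w 0| + 1) * Real.exp K * Real.exp (-a * y) := by
        have : (0:ℝ) < Real.exp K := Real.exp_pos _
        have h8 : |w 0| ≤ |w 0| + 1 := by linarith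
        nlinarith [Real.exp_pos (-a * y)]
end

section
/- Let U : ℝ → ℝ be bounded and measurable, let k be a positive integer, and suppose that U(x+k) ≥ U(x) for almost every x ∈ ℝ. Then the function x ↦ U(x+k) − U(x) is integrable on ℝ, and ∫_ℝ (U(x+k) − U(x)) dx ≤ 2k · sup_{x∈ℝ} |U(x)|. -/
open MeasureTheory Filter Set Topology

/-- Helper: a bounded measurable function is interval integrable. -/
lemma bdd_meas_intervalIntegrable (f : ℝ → ℝ) (hf : Measurable f)
    (M : ℝ) (hM : ∀ x, |f x| ≤ M) (a b : ℝ) :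
    IntervalIntegrable f volume a b := by
  rw [intervalIntegrable_iff]
  refine Integrable.mono' (g := fun _ => M)
    ((integrableOn_const_iff (C := M)).2 (Or.inr measure_Ioc_lt_top))
    hf.aestronglyMeasurable (Filter.Eventually.of_forall fun x => ?_)
  simpa using hM x

/-- if `U` is bounded and measurable and `U(·+k) ≥ U` a.e. for a
positive integer `k`, then `U(·+k) − U` is integrable with integral at most
`2k · sup |U|`. -/
theorem translate_difference_integrable
    (U : ℝ → ℝ) (hmeas : Measurable U)
    (hbd : ∃ M, ∀ x, |U x| ≤ M)
    (k : ℕ) (hk : 0 < k)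
    (hmono : ∀ᵐ x : ℝ ∂volume, U x ≤ U (x + (k : ℝ))) :
    Integrable (fun x => U (x + (k : ℝ)) - U x) ∧
    (∫ x : ℝ, (U (x + (k : ℝ)) - U x)) ≤ 2 * (k : ℝ) * ⨆ x : ℝ, |U x| := by
  obtain ⟨M, hM⟩ := hbd
  set M0 : ℝ := ⨆ x : ℝ, |U x| with hM0def
  have hbdd : BddAbove (Set.range fun x : ℝ => |U x|) :=
    ⟨M, by rintro y ⟨x, rfl⟩; exact hM x⟩
  have hle : ∀ x, |U x| ≤ M0 := fun x => le_ciSup hbdd x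
  have hM0nn : 0 ≤ M0 := (abs_nonneg (U 0)).trans (hle 0)
  set g : ℝ → ℝ := fun x => U (x + (k : ℝ)) - U x with hgdef
  have hUmeas' : Measurable fun x : ℝ => U (x + (k : ℝ)) :=
    hmeas.comp (measurable_add_const _)
  have hgmeas : Measurable g := hUmeas'.sub hmeas
  have hgnn : ∀ᵐ x : ℝ ∂volume, 0 ≤ g x :=
    hmono.mono fun x hx => sub_nonneg.2 hx
  have hUint : ∀ a b : ℝ, IntervalIntegrable U volume a b :=
    bdd_meas_intervalIntegrable U hmeas M0 hle
  have hU'int : ∀ a b : ℝ, IntervalIntegrable (fun x => U (x + (k : ℝ))) volume a b :=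
    bdd_meas_intervalIntegrable _ hUmeas' M0 (fun x => hle _)
  have hgbd : ∀ x, |g x| ≤ 2 * M0 := by
    intro x
    calc |g x| ≤ |U (x + (k : ℝ))| + |U x| := abs_sub _ _
      _ ≤ M0 + M0 := add_le_add (hle _) (hle _)
      _ = 2 * M0 := by ring
  have hgint : ∀ a b : ℝ, IntervalIntegrable g volume a b :=
    bdd_meas_intervalIntegrable g hgmeas (2 * M0) hgbd
  -- bound on short interval integrals of U
  have key : ∀ a : ℝ, |∫ x in a..(a + (k : ℝ)), U x| ≤ (k : ℝ) * M0 := by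
    intro a
    have := intervalIntegral.norm_integral_le_of_norm_le_const
      (a := a) (b := a + (k : ℝ)) (C := M0) (f := U)
      (fun x _ => by simpa using hle x)
    have he : |a + (k : ℝ) - a| = (k : ℝ) := by
      rw [add_sub_cancel_left]; exact abs_of_nonneg (Nat.cast_nonneg k)
    rw [he] at this
    simpa [mul_comm] using this
  -- bound on symmetric interval integrals of g
  have Ibound : ∀ n : ℕ, (∫ x in (-(n : ℝ))..(n : ℝ), g x) ≤ 2 * (k : ℝ) * M0 := by
    intro n
    have h1 : (∫ x in (-(n : ℝ))..(n : ℝ), U (x + (k : ℝ)))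
        = ∫ x in (-(n : ℝ) + (k : ℝ))..((n : ℝ) + (k : ℝ)), U x :=
      intervalIntegral.integral_comp_add_right U (k : ℝ)
    have e1 : (∫ x in (-(n : ℝ) + (k : ℝ))..((n : ℝ) + (k : ℝ)), U x)
        = (∫ x in (-(n : ℝ) + (k : ℝ))..(n : ℝ), U x)
          + ∫ x in (n : ℝ)..((n : ℝ) + (k : ℝ)), U x :=
      (intervalIntegral.integral_add_adjacent_intervals (hUint _ _) (hUint _ _)).symm
    have e2 : (∫ x in (-(n : ℝ))..(n : ℝ), U x)
        = (∫ x in (-(n : ℝ))..(-(n : ℝ) + (k : ℝ)), U x)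
          + ∫ x in (-(n : ℝ) + (k : ℝ))..(n : ℝ), U x :=
      (intervalIntegral.integral_add_adjacent_intervals (hUint _ _) (hUint _ _)).symm
    have hsplit : (∫ x in (-(n : ℝ))..(n : ℝ), g x)
        = (∫ x in (n : ℝ)..((n : ℝ) + (k : ℝ)), U x)
          - ∫ x in (-(n : ℝ))..(-(n : ℝ) + (k : ℝ)), U x := by
      have := intervalIntegral.integral_sub (hU'int (-(n : ℝ)) (n : ℝ))
        (hUint (-(n : ℝ)) (n : ℝ))
      rw [hgdef]
      rw [this, h1, e1, e2]; ring
    rw [hsplit]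
    have b1 := (abs_le.1 (key (n : ℝ))).2
    have b2 := (abs_le.1 (key (-(n : ℝ)))).1
    linarith
  -- finiteness of the lintegral of g
  have hsets : ∀ n : ℕ, MeasurableSet (Set.Ioc (-(n : ℝ)) (n : ℝ)) :=
    fun n => measurableSet_Ioc
  set F : ℕ → ℝ → ENNReal :=
    fun n => (Set.Ioc (-(n : ℝ)) (n : ℝ)).indicator fun x => ENNReal.ofReal (g x) with hFdef
  have hFmeas : ∀ n, Measurable (F n) :=
    fun n => ((ENNReal.measurable_ofReal.comp hgmeas)).indicator (hsets n)
  have hFmono : Monotone F := by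
    intro m n hmn
    apply Set.indicator_le_indicator_of_subset
    · exact Set.Ioc_subset_Ioc (by exact_mod_cast neg_le_neg (Nat.cast_le.2 hmn))
        (by exact_mod_cast hmn)
    · intro x; exact zero_le
  have hFsup : ∀ x : ℝ, (⨆ n, F n x) = ENNReal.ofReal (g x) := by
    intro x
    apply le_antisymm
    · exact iSup_le fun n => Set.indicator_le_self _ _ x
    · obtain ⟨n, hn⟩ := exists_nat_gt |x|
      have hx : x ∈ Set.Ioc (-(n : ℝ)) (n : ℝ) :=
        ⟨neg_lt.1 (lt_of_le_of_lt (neg_le_abs x) hn), le_of_lt (lt_of_le_of_lt (le_abs_self x) hn)⟩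
      calc ENNReal.ofReal (g x) = F n x := by rw [hFdef]; simp [Set.indicator_of_mem hx]
        _ ≤ ⨆ n, F n x := le_iSup (fun n => F n x) n
  have hgIoc : ∀ n : ℕ, IntegrableOn g (Set.Ioc (-(n : ℝ)) (n : ℝ)) volume := by
    intro n
    have := hgint (-(n : ℝ)) (n : ℝ)
    rw [intervalIntegrable_iff] at this
    rwa [Set.uIoc_of_le (neg_le_self (Nat.cast_nonneg n))] at this
  have hIocEq : ∀ n : ℕ, (∫ x in Set.Ioc (-(n : ℝ)) (n : ℝ), g x)
      = ∫ x in (-(n : ℝ))..(n : ℝ), g x := by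
    intro n
    rw [intervalIntegral.integral_of_le (neg_le_self (Nat.cast_nonneg n))]
  have hlin : (∫⁻ x, ENNReal.ofReal (g x)) ≤ ENNReal.ofReal (2 * (k : ℝ) * M0) := by
    have h1 : (∫⁻ x, ENNReal.ofReal (g x)) = ⨆ n, ∫⁻ x, F n x := by
      rw [← MeasureTheory.lintegral_iSup hFmeas hFmono]
      congr 1; ext x; rw [hFsup x]
    rw [h1]
    refine iSup_le fun n => ?_
    rw [hFdef]
    rw [MeasureTheory.lintegral_indicator (hsets n)]
    have h2 : (∫⁻ x in Set.Ioc (-(n : ℝ)) (n : ℝ), ENNReal.ofReal (g x))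
        = ENNReal.ofReal (∫ x in Set.Ioc (-(n : ℝ)) (n : ℝ), g x) :=
      (MeasureTheory.ofReal_integral_eq_lintegral_ofReal (hgIoc n)
        (ae_restrict_of_ae hgnn)).symm
    rw [h2]
    exact ENNReal.ofReal_le_ofReal (by rw [hIocEq n]; exact Ibound n)
  have hlt : (∫⁻ x, ENNReal.ofReal (g x)) < ⊤ :=
    lt_of_le_of_lt hlin ENNReal.ofReal_lt_top
  have hgInt : Integrable g :=
    ⟨hgmeas.aestronglyMeasurable, (hasFiniteIntegral_iff_ofReal hgnn).2 hlt⟩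
  refine ⟨hgInt, ?_⟩
  have hInt := MeasureTheory.integral_eq_lintegral_of_nonneg_ae hgnn
    hgmeas.aestronglyMeasurable
  rw [show (fun x => U (x + (k : ℝ)) - U x) = g from rfl] at *
  rw [hInt]
  calc (∫⁻ x, ENNReal.ofReal (g x)).toReal
      ≤ (ENNReal.ofReal (2 * (k : ℝ) * M0)).toReal :=
        ENNReal.toReal_mono ENNReal.ofReal_ne_top hlin
    _ = 2 * (k : ℝ) * M0 := ENNReal.toReal_ofReal (by positivity)
end

section
/- Let α ∈ ℝ, let v_-, v_+ be periodic stationary solutions with constant α such that v_-(x) < v_+(x) for all x, and let (v_l, v_r) be either (v_-, v_+) or (v_+, v_-). Let U and V be two shock profiles, each connecting v_l to v_r. Then U − V is integrable on ℝ, i.e. U − V ∈ L¹(ℝ). -/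
open MeasureTheory Filter Set Topology

/-! ### Auxiliary lemmas -/

/-- A `1`-periodic function is periodic with any integer period. -/
lemma per_int {v : ℝ → ℝ} (h : ∀ x, v (x + 1) = v x) (n : ℤ) (x : ℝ) :
    v (x + n) = v x := by
  have hp : Function.Periodic v 1 := h
  simpa using (hp.zsmul n) x

/-- Value of a periodic function at the fractional part. -/
lemma per_fract {v : ℝ → ℝ} (h : ∀ x, v (x + 1) = v x) (x : ℝ) :
    v x = v (Int.fract x) := by
  conv_lhs => rw [← Int.fract_add_floor x]
  exact per_int h ⌊x⌋ (Int.fract x)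

/-- A continuous periodic function is bounded. -/
lemma per_bounded {v : ℝ → ℝ} (hc : Continuous v) (h : ∀ x, v (x + 1) = v x) :
    ∃ C, ∀ x, |v x| ≤ C := by
  obtain ⟨C, hC⟩ :=
    (isCompact_Icc (a := (0:ℝ)) (b := 1)).exists_bound_of_continuousOn hc.continuousOn
  refine ⟨C, fun x => ?_⟩
  rw [per_fract h x, ← Real.norm_eq_abs]
  exact hC _ ⟨Int.fract_nonneg x, (Int.fract_lt_one x).le⟩

/-- Uniqueness of solutions to the ODE `u' = A(x,u) - α`. -/
lemma sol_eq {A : ℝ → ℝ → ℝ} (hA : ContDiff ℝ 1 (Function.uncurry A)) (α : ℝ)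
    {f g : ℝ → ℝ} (hf : ContDiff ℝ 1 f) (hf' : ∀ x, deriv f x = A x (f x) - α)
    (hg : ContDiff ℝ 1 g) (hg' : ∀ x, deriv g x = A x (g x) - α)
    {x₀ : ℝ} (h0 : f x₀ = g x₀) : f = g := by
  funext t
  set a : ℝ := min t x₀ - 1 with hadef
  set b : ℝ := max t x₀ + 1 with hbdef
  have hx₀ : x₀ ∈ Ioo a b :=
    ⟨by have := min_le_right t x₀; simp only [hadef]; linarith,
     by have := le_max_right t x₀; simp only [hbdef]; linarith⟩
  have ht : t ∈ Icc a b :=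
    ⟨by have := min_le_left t x₀; simp only [hadef]; linarith,
     by have := le_max_left t x₀; simp only [hbdef]; linarith⟩
  obtain ⟨Mf, hMf⟩ :=
    (isCompact_Icc (a := a) (b := b)).exists_bound_of_continuousOn hf.continuous.continuousOn
  obtain ⟨Mg, hMg⟩ :=
    (isCompact_Icc (a := a) (b := b)).exists_bound_of_continuousOn hg.continuous.continuousOn
  set M : ℝ := max Mf Mg with hMdef
  have hfM : ∀ x ∈ Icc a b, f x ∈ Icc (-M) M := by
    intro x hx
    have h1 : |f x| ≤ M := le_trans (Real.norm_eq_abs (f x) ▸ hMf x hx) (le_max_left _ _)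
    exact abs_le.mp h1
  have hgM : ∀ x ∈ Icc a b, g x ∈ Icc (-M) M := by
    intro x hx
    have h1 : |g x| ≤ M := le_trans (Real.norm_eq_abs (g x) ▸ hMg x hx) (le_max_right _ _)
    exact abs_le.mp h1
  -- Lipschitz constant on a compact box
  obtain ⟨C, hC⟩ :=
    ((isCompact_Icc (a := a) (b := b)).prod
      (isCompact_Icc (a := -M) (b := M))).exists_bound_of_continuousOn
      ((hA.continuous_fderiv one_ne_zero).continuousOn)
  set L : NNReal := ⟨max C 0, le_max_right _ _⟩ with hLdef
  have hLip : LipschitzOnWith L (Function.uncurry A) (Icc a b ×ˢ Icc (-M) M) := by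
    apply Convex.lipschitzOnWith_of_nnnorm_fderiv_le
      (fun x _ => (hA.differentiable one_ne_zero).differentiableAt)
      (fun x hx => ?_) ((convex_Icc a b).prod (convex_Icc (-M) M))
    rw [← NNReal.coe_le_coe, coe_nnnorm]
    exact (hC x hx).trans (le_max_left C 0)
  set s : ℝ → Set ℝ := fun x => if x ∈ Icc a b then Icc (-M) M else (∅ : Set ℝ) with hsdef
  have hv : ∀ x : ℝ, LipschitzOnWith L (fun u => A x u - α) (s x) := by
    intro x
    by_cases hx : x ∈ Icc a b
    · simp only [hsdef, if_pos hx]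
      rw [lipschitzOnWith_iff_dist_le_mul]
      intro u hu w hw
      have h1 : dist (A x u - α) (A x w - α) = dist (A x u) (A x w) := dist_sub_right _ _ _
      have h2 := (lipschitzOnWith_iff_dist_le_mul.mp hLip) (x, u)
        (Set.mk_mem_prod hx hu) (x, w) (Set.mk_mem_prod hx hw)
      have h3 : dist ((x, u) : ℝ × ℝ) (x, w) = dist u w := by
        rw [Prod.dist_eq]
        simp [max_eq_right dist_nonneg]
      rw [h1]
      calc dist (A x u) (A x w) ≤ L * dist ((x, u) : ℝ × ℝ) (x, w) := h2
        _ = L * dist u w := by rw [h3]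
    · simp only [hsdef, if_neg hx]
      exact lipschitzOnWith_empty _ _
  have key := ODE_solution_unique_of_mem_Icc (fun t _ => hv t) hx₀
    hf.continuous.continuousOn
    (fun x _ => by
      have hd := ((hf.differentiable one_ne_zero) x).hasDerivAt
      rwa [hf' x] at hd)
    (fun x hx => by
      have hx' : x ∈ Icc a b := Ioo_subset_Icc_self hx
      simp only [hsdef, if_pos hx']
      exact hfM x hx')
    hg.continuous.continuousOn
    (fun x _ => by
      have hd := ((hg.differentiable one_ne_zero) x).hasDerivAt
      rwa [hg' x] at hd)
    (fun x hx => by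
      have hx' : x ∈ Icc a b := Ioo_subset_Icc_self hx
      simp only [hsdef, if_pos hx']
      exact hgM x hx')
    h0
  exact key ht

/-- Two solutions of the same scalar ODE are globally ordered. -/
lemma sol_dichotomy {A : ℝ → ℝ → ℝ} (hA : ContDiff ℝ 1 (Function.uncurry A)) (α : ℝ)
    {f g : ℝ → ℝ} (hf : ContDiff ℝ 1 f) (hf' : ∀ x, deriv f x = A x (f x) - α)
    (hg : ContDiff ℝ 1 g) (hg' : ∀ x, deriv g x = A x (g x) - α) :
    (∀ x, f x ≤ g x) ∨ ∀ x, g x ≤ f x := by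
  by_cases hc : ∃ x, f x = g x
  · obtain ⟨x₀, h0⟩ := hc
    have hfg := sol_eq hA α hf hf' hg hg' h0
    exact Or.inl fun x => le_of_eq (congrFun hfg x)
  · push_neg at hc
    by_contra hcon
    push_neg at hcon
    obtain ⟨⟨x₁, h₁⟩, ⟨x₂, h₂⟩⟩ := hcon
    have hcont : ContinuousOn (fun x => f x - g x) (uIcc x₁ x₂) :=
      (hf.continuous.sub hg.continuous).continuousOn
    have h0mem : (0:ℝ) ∈ uIcc (f x₁ - g x₁) (f x₂ - g x₂) := by
      rw [Set.mem_uIcc]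
      right
      constructor <;> linarith
    obtain ⟨c, _, hc0⟩ := intermediate_value_uIcc hcont h0mem
    simp only at hc0
    exact hc c (by linarith)

/-- Telescoping bound on the interval integrals of `U x - U (x + c)`. -/
lemma shift_integral_bound {U : ℝ → ℝ} (hUc : Continuous U) {M : ℝ} (hM : ∀ x, |U x| ≤ M)
    (c : ℝ) (e d : ℝ) :
    |∫ x in e..d, (U x - U (x + c))| ≤ 2 * (M * |c|) := by
  have hInt : ∀ p q : ℝ, IntervalIntegrable U volume p q := fun p q =>
    hUc.intervalIntegrable p q
  have h1 : (∫ x in e..d, (U x - U (x + c)))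
      = (∫ x in e..d, U x) - ∫ x in e..d, U (x + c) :=
    intervalIntegral.integral_sub (hInt _ _)
      ((hUc.comp (continuous_id.add continuous_const)).intervalIntegrable _ _)
  rw [h1, intervalIntegral.integral_comp_add_right]
  have h2 : (∫ x in e..d, U x) = (∫ x in e..(e+c), U x) + ∫ x in (e+c)..d, U x :=
    (intervalIntegral.integral_add_adjacent_intervals (hInt _ _) (hInt _ _)).symm
  have h3 : (∫ x in (e+c)..(d+c), U x) = (∫ x in (e+c)..d, U x) + ∫ x in d..(d+c), U x :=
    (intervalIntegral.integral_add_adjacent_intervals (hInt _ _) (hInt _ _)).symm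
  rw [h2, h3]
  have heq : (∫ x in e..(e+c), U x) + (∫ x in (e+c)..d, U x)
      - ((∫ x in (e+c)..d, U x) + ∫ x in d..(d+c), U x)
      = (∫ x in e..(e+c), U x) - ∫ x in d..(d+c), U x := by ring
  rw [heq]
  have hb1 : |∫ x in e..(e+c), U x| ≤ M * |c| := by
    have := intervalIntegral.norm_integral_le_of_norm_le_const
      (a := e) (b := e + c) (C := M) (f := U)
      (fun x _ => by rw [Real.norm_eq_abs]; exact hM x)
    simpa using this
  have hb2 : |∫ x in d..(d+c), U x| ≤ M * |c| := by
    have := intervalIntegral.norm_integral_le_of_norm_le_const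
      (a := d) (b := d + c) (C := M) (f := U)
      (fun x _ => by rw [Real.norm_eq_abs]; exact hM x)
    simpa using this
  calc |(∫ x in e..(e+c), U x) - ∫ x in d..(d+c), U x|
      ≤ |∫ x in e..(e+c), U x| + |∫ x in d..(d+c), U x| := abs_sub _ _
    _ ≤ M * |c| + M * |c| := add_le_add hb1 hb2
    _ = 2 * (M * |c|) := by ring

/-- The difference between a solution and its shift by a period of `A` is integrable. -/
lemma shift_diff_integrable {A : ℝ → ℝ → ℝ} (hA : ContDiff ℝ 1 (Function.uncurry A)) (α : ℝ)
    {U : ℝ → ℝ} (hUc : ContDiff ℝ 1 U) (hU' : ∀ x, deriv U x = A x (U x) - α)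
    {M : ℝ} (hM : ∀ x, |U x| ≤ M)
    (c : ℝ) (hAc : ∀ y u, A (y + c) u = A y u) :
    Integrable (fun x => U x - U (x + c)) := by
  have hgC : ContDiff ℝ 1 (fun x => U (x + c)) := hUc.comp (contDiff_id.add contDiff_const)
  have hg' : ∀ x, deriv (fun x => U (x + c)) x = A x (U (x + c)) - α := by
    intro x
    rw [deriv_comp_add_const, hU' (x + c), hAc]
  have hdi := sol_dichotomy hA α hUc hU' hgC hg'
  have hcont : Continuous (fun x => U x - U (x + c)) :=
    hUc.continuous.sub (hUc.continuous.comp (continuous_id.add continuous_const))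
  apply integrable_of_intervalIntegral_norm_bounded (l := atTop)
    (a := fun i : ℕ => -(i:ℝ)) (b := fun i : ℕ => (i:ℝ)) (2 * (M * |c|))
  · intro i
    exact hcont.integrableOn_Ioc
  · exact tendsto_neg_atBot_iff.mpr tendsto_natCast_atTop_atTop
  · exact tendsto_natCast_atTop_atTop
  · apply Filter.Eventually.of_forall
    intro i
    have hbd := shift_integral_bound hUc.continuous hM c (-(i:ℝ)) i
    rcases hdi with h | h
    · have hcg : (∫ x in (-(i:ℝ))..(i:ℝ), ‖U x - U (x + c)‖)
          = ∫ x in (-(i:ℝ))..(i:ℝ), -(U x - U (x + c)) :=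
        intervalIntegral.integral_congr fun x _ => by
          rw [Real.norm_eq_abs, abs_of_nonpos (by linarith [h x])]
      rw [hcg, intervalIntegral.integral_neg]
      exact (neg_le_abs _).trans hbd
    · have hcg : (∫ x in (-(i:ℝ))..(i:ℝ), ‖U x - U (x + c)‖)
          = ∫ x in (-(i:ℝ))..(i:ℝ), (U x - U (x + c)) :=
        intervalIntegral.integral_congr fun x _ => by
          rw [Real.norm_eq_abs, abs_of_nonneg (by linarith [h x])]
      rw [hcg]
      exact (le_abs_self _).trans hbd

/-- the difference of two shock profiles with the same asymptotic
states is integrable. -/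
theorem shock_profile_difference_integrable
    (A : ℝ → ℝ → ℝ)
    (hA : ContDiff ℝ 1 (Function.uncurry A))
    (hper : ∀ y v, A (y + 1) v = A y v)
    (α : ℝ) (vm vp : ℝ → ℝ)
    (hvm : PerStat A α vm) (hvp : PerStat A α vp)
    (hlt : ∀ x, vm x < vp x)
    (vl vr : ℝ → ℝ)
    (hlr : (vl = vm ∧ vr = vp) ∨ (vl = vp ∧ vr = vm))
    (U V : ℝ → ℝ)
    (hU : ShockProfile A α vl vr U) (hV : ShockProfile A α vl vr V) :
    Integrable (fun x => U x - V x) := by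
  obtain ⟨hUc, hU', hUbot, hUtop⟩ := hU
  obtain ⟨hVc, hV', hVbot, hVtop⟩ := hV
  obtain ⟨hvmC, hvmP, hvm'⟩ := hvm
  obtain ⟨hvpC, hvpP, hvp'⟩ := hvp
  -- integer periods of `A`
  have hAint : ∀ (n : ℤ) (y u : ℝ), A (y + (n:ℝ)) u = A y u := by
    intro n y u
    exact per_int (v := fun z => A z u) (fun z => hper z u) n y
  -- solutions obtained by integer shifts
  have shiftC : ∀ n : ℤ, ContDiff ℝ 1 (fun x => U (x + (n:ℝ))) := fun n =>
    hUc.comp (contDiff_id.add contDiff_const)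
  have shift' : ∀ (n : ℤ) (x : ℝ),
      deriv (fun x => U (x + (n:ℝ))) x = A x (U (x + (n:ℝ))) - α := by
    intro n x
    rw [deriv_comp_add_const, hU' (x + (n:ℝ)), hAint n x]
  -- the gap between vm and vp
  obtain ⟨δ, hδpos, hδ⟩ : ∃ δ > 0, ∀ x, δ ≤ vp x - vm x := by
    have hcont : Continuous fun x => vp x - vm x := hvpC.continuous.sub hvmC.continuous
    obtain ⟨z, hz, hzmin⟩ := (isCompact_Icc (a := (0:ℝ)) (b := 1)).exists_isMinOn
      (nonempty_Icc.mpr zero_le_one) hcont.continuousOn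
    refine ⟨vp z - vm z, sub_pos.mpr (hlt z), fun x => ?_⟩
    have hper' : ∀ y, vp (y + 1) - vm (y + 1) = vp y - vm y := fun y => by
      rw [hvpP, hvmP]
    have h1 : vp x - vm x = vp (Int.fract x) - vm (Int.fract x) :=
      per_fract (v := fun y => vp y - vm y) hper' x
    rw [h1]
    exact (isMinOn_iff.mp hzmin) _ ⟨Int.fract_nonneg x, (Int.fract_lt_one x).le⟩
  -- every shock profile lies strictly between vm and vp
  have key : ∀ W : ℝ → ℝ, ContDiff ℝ 1 W → (∀ x, deriv W x = A x (W x) - α) →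
      Tendsto (fun x => W x - vl x) atBot (nhds 0) →
      Tendsto (fun x => W x - vr x) atTop (nhds 0) →
      ∀ x, vm x < W x ∧ W x < vp x := by
    intro W hWc hW' hWbot hWtop
    have hm : (∃ x, |W x - vm x| < δ) := by
      rcases hlr with ⟨hl, _⟩ | ⟨_, hr⟩
      · have hb : Tendsto (fun x => W x - vm x) atBot (nhds 0) := by
          rw [← hl]; exact hWbot
        obtain ⟨x, hx⟩ := (hb.eventually (Metric.ball_mem_nhds (0:ℝ) hδpos)).exists
        exact ⟨x, by simpa [Real.dist_eq] using hx⟩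
      · have hb : Tendsto (fun x => W x - vm x) atTop (nhds 0) := by
          rw [← hr]; exact hWtop
        obtain ⟨x, hx⟩ := (hb.eventually (Metric.ball_mem_nhds (0:ℝ) hδpos)).exists
        exact ⟨x, by simpa [Real.dist_eq] using hx⟩
    have hp : (∃ x, |W x - vp x| < δ) := by
      rcases hlr with ⟨_, hr⟩ | ⟨hl, _⟩
      · have hb : Tendsto (fun x => W x - vp x) atTop (nhds 0) := by
          rw [← hr]; exact hWtop
        obtain ⟨x, hx⟩ := (hb.eventually (Metric.ball_mem_nhds (0:ℝ) hδpos)).exists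
        exact ⟨x, by simpa [Real.dist_eq] using hx⟩
      · have hb : Tendsto (fun x => W x - vp x) atBot (nhds 0) := by
          rw [← hl]; exact hWbot
        obtain ⟨x, hx⟩ := (hb.eventually (Metric.ball_mem_nhds (0:ℝ) hδpos)).exists
        exact ⟨x, by simpa [Real.dist_eq] using hx⟩
    have h1 : ¬ ∀ x, vp x ≤ W x := by
      intro hcon
      obtain ⟨x, hx⟩ := hm
      have h2 : δ ≤ W x - vm x := le_trans (hδ x) (by linarith [hcon x])
      rw [abs_of_nonneg (by linarith)] at hx
      linarith
    have h2 : ¬ ∀ x, W x ≤ vm x := by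
      intro hcon
      obtain ⟨x, hx⟩ := hp
      have h3 : δ ≤ vp x - W x := le_trans (hδ x) (by linarith [hcon x])
      rw [abs_of_nonpos (by linarith)] at hx
      linarith
    have hWlevp : ∀ x, W x ≤ vp x :=
      (sol_dichotomy hA α hWc hW' hvpC hvp').resolve_right h1
    have hvmleW : ∀ x, vm x ≤ W x :=
      (sol_dichotomy hA α hvmC hvm' hWc hW').resolve_right h2
    intro x
    constructor
    · rcases lt_or_eq_of_le (hvmleW x) with h | h
      · exact h
      · exfalso
        have hfun := sol_eq hA α hvmC hvm' hWc hW' h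
        exact h2 fun y => le_of_eq (congrFun hfun y).symm
    · rcases lt_or_eq_of_le (hWlevp x) with h | h
      · exact h
      · exfalso
        have hfun := sol_eq hA α hWc hW' hvpC hvp' h
        exact h1 fun y => le_of_eq (congrFun hfun y).symm
  have hVb := key V hVc hV' hVbot hVtop
  -- U is bounded
  obtain ⟨M, hM⟩ : ∃ M, ∀ x, |U x| ≤ M := by
    obtain ⟨Cm, hCm⟩ := per_bounded hvmC.continuous hvmP
    obtain ⟨Cp, hCp⟩ := per_bounded hvpC.continuous hvpP
    have hUb := key U hUc hU' hUbot hUtop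
    refine ⟨max Cm Cp, fun x => ?_⟩
    have h1 := (hUb x).1
    have h2 := (hUb x).2
    have h3 := abs_le.mp (hCm x)
    have h4 := abs_le.mp (hCp x)
    rw [abs_le]
    constructor
    · calc -(max Cm Cp) ≤ -Cm := by simp [le_max_left]
        _ ≤ vm x := h3.1
        _ ≤ U x := le_of_lt h1
    · calc U x ≤ vp x := le_of_lt h2
        _ ≤ Cp := h4.2
        _ ≤ max Cm Cp := le_max_right _ _
  -- convergence of integer shifts of U at a point
  have shift_tendsto : ∀ (w : ℝ → ℝ), (∀ x, w (x + 1) = w x) →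
      ∀ (l : Filter ℝ) (s : ℕ → ℤ), Tendsto (fun k : ℕ => ((s k : ℝ))) atTop l →
      Tendsto (fun x => U x - w x) l (nhds 0) →
      Tendsto (fun k : ℕ => U ((s k : ℝ))) atTop (nhds (w 0)) := by
    intro w hwP l s hs hlim
    have h1 : Tendsto (fun k : ℕ => U ((s k : ℝ)) - w ((s k : ℝ))) atTop (nhds 0) :=
      hlim.comp hs
    have h2 : ∀ k : ℕ, w ((s k : ℝ)) = w 0 := fun k => by
      have := per_int hwP (s k) 0
      simpa using this
    have h3 := h1.add_const (w 0)
    rw [zero_add] at h3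
    refine h3.congr fun k => ?_
    rw [h2 k]
    ring
  -- find an integer shift of U lying above V
  have upper : ∃ c : ℝ, (∀ y u, A (y + c) u = A y u) ∧ ∀ x, V x ≤ U (x + c) := by
    have hex : ∃ n : ℤ, V 0 < U ((0:ℝ) + (n:ℝ)) := by
      rcases hlr with ⟨hl, hr⟩ | ⟨hl, hr⟩
      · have hUtop' : Tendsto (fun x => U x - vp x) atTop (nhds 0) := by
          rw [← hr]; exact hUtop
        have ht := shift_tendsto vp hvpP atTop (fun k : ℕ => (k : ℤ))
          (by
            have h := tendsto_natCast_atTop_atTop (R := ℝ)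
            exact h.congr fun k => by push_cast; ring) hUtop'
        obtain ⟨k, hk⟩ := (ht.eventually_const_lt (hVb 0).2).exists
        exact ⟨(k : ℤ), by rw [zero_add]; exact_mod_cast hk⟩
      · have hUbot' : Tendsto (fun x => U x - vp x) atBot (nhds 0) := by
          rw [← hl]; exact hUbot
        have ht := shift_tendsto vp hvpP atBot (fun k : ℕ => -(k : ℤ))
          (by
            have h : Tendsto (fun k : ℕ => -((k:ℕ):ℝ)) atTop atBot :=
              tendsto_neg_atBot_iff.mpr tendsto_natCast_atTop_atTop
            exact h.congr fun k => by push_cast; ring) hUbot'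
        obtain ⟨k, hk⟩ := (ht.eventually_const_lt (hVb 0).2).exists
        exact ⟨-(k : ℤ), by rw [zero_add]; exact_mod_cast hk⟩
    obtain ⟨n, hn⟩ := hex
    refine ⟨(n : ℝ), hAint n, ?_⟩
    rcases sol_dichotomy hA α hVc hV' (shiftC n) (shift' n) with h | h
    · exact h
    · exfalso
      have := h 0
      linarith
  -- find an integer shift of U lying below V
  have lower : ∃ c : ℝ, (∀ y u, A (y + c) u = A y u) ∧ ∀ x, U (x + c) ≤ V x := by
    have hex : ∃ n : ℤ, U ((0:ℝ) + (n:ℝ)) < V 0 := by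
      rcases hlr with ⟨hl, hr⟩ | ⟨hl, hr⟩
      · have hUbot' : Tendsto (fun x => U x - vm x) atBot (nhds 0) := by
          rw [← hl]; exact hUbot
        have ht := shift_tendsto vm hvmP atBot (fun k : ℕ => -(k : ℤ))
          (by
            have h : Tendsto (fun k : ℕ => -((k:ℕ):ℝ)) atTop atBot :=
              tendsto_neg_atBot_iff.mpr tendsto_natCast_atTop_atTop
            exact h.congr fun k => by push_cast; ring) hUbot'
        obtain ⟨k, hk⟩ := (ht.eventually_lt_const (hVb 0).1).exists
        exact ⟨-(k : ℤ), by rw [zero_add]; exact_mod_cast hk⟩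
      · have hUtop' : Tendsto (fun x => U x - vm x) atTop (nhds 0) := by
          rw [← hr]; exact hUtop
        have ht := shift_tendsto vm hvmP atTop (fun k : ℕ => (k : ℤ))
          (by
            have h := tendsto_natCast_atTop_atTop (R := ℝ)
            exact h.congr fun k => by push_cast; ring) hUtop'
        obtain ⟨k, hk⟩ := (ht.eventually_lt_const (hVb 0).1).exists
        exact ⟨(k : ℤ), by rw [zero_add]; exact_mod_cast hk⟩
    obtain ⟨n, hn⟩ := hex
    refine ⟨(n : ℝ), hAint n, ?_⟩
    rcases sol_dichotomy hA α (shiftC n) (shift' n) hVc hV' with h | h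
    · exact h
    · exfalso
      have := h 0
      linarith
  obtain ⟨c₁, hAc₁, hup⟩ := upper
  obtain ⟨c₂, hAc₂, hlo⟩ := lower
  have h1 : Integrable (fun x => U x - U (x + c₁)) :=
    shift_diff_integrable hA α hUc hU' hM c₁ hAc₁
  have h2 : Integrable (fun x => U x - U (x + c₂)) :=
    shift_diff_integrable hA α hUc hU' hM c₂ hAc₂
  apply Integrable.mono' (h1.abs.add h2.abs)
    ((hUc.continuous.sub hVc.continuous).aestronglyMeasurable)
  apply Filter.Eventually.of_forall
  intro x
  rw [Real.norm_eq_abs, abs_le]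
  have hx1 := hup x
  have hx2 := hlo x
  have ha1 : -(|U x - U (x + c₁)|) ≤ U x - U (x + c₁) := neg_abs_le _
  have ha2 : U x - U (x + c₂) ≤ |U x - U (x + c₂)| := le_abs_self _
  have ha3 : (0:ℝ) ≤ |U x - U (x + c₁)| := abs_nonneg _
  have ha4 : (0:ℝ) ≤ |U x - U (x + c₂)| := abs_nonneg _
  constructor <;> simp only [Pi.add_apply, Pi.sub_apply] <;> linarith
end

section
/- Assume in addition that for every y ∈ ℝ the function v ↦ A(y,v) is convex. Let λ ∈ (0,1), let c₁, c₂, c ∈ ℝ, and let v₁, v₂, u : ℝ → ℝ be continuously differentiable 1-periodic functions with v₁'(x) = A(x,v₁(x)) − c₁, v₂'(x) = A(x,v₂(x)) − c₂, and u'(x) = A(x,u(x)) − c for all x ∈ ℝ, such that ∫₀¹ u = λ ∫₀¹ v₁ + (1−λ) ∫₀¹ v₂. Then c ≤ λ c₁ + (1−λ) c₂. If moreover v ↦ A(y,v) is strictly convex for every y and ∫₀¹ v₁ ≠ ∫₀¹ v₂, then c < λ c₁ + (1−λ) c₂. (In particular the homogenized flux Ā, defined by Ā(p) = the constant c of the periodic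 stationary solution with mean p, is convex, and strictly convex when A is strictly convex in its second variable.) -/
open MeasureTheory Filter Set Topology

private lemma no_monotone_aux (z B h : ℝ → ℝ) (hz : Continuous z)
    (hzper : Function.Periodic z 1)
    (hzint : (∫ y in (0:ℝ)..1, z y) = 0)
    (hgd : ∀ x, HasDerivAt (fun x => z x * Real.exp (-B x))
      (h x * Real.exp (-B x)) x)
    (hh0 : ∀ x, 0 ≤ h x) (x₁ : ℝ) (hx₁ : 0 < h x₁) : False := by
  set g : ℝ → ℝ := fun x => z x * Real.exp (-B x) with hgdef
  have hgmono : Monotone g := by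
    refine monotone_of_deriv_nonneg (fun x => (hgd x).differentiableAt) (fun x => ?_)
    rw [(hgd x).deriv]
    exact mul_nonneg (hh0 x) (Real.exp_pos _).le
  have hintper : ∀ a : ℝ, (∫ y in a..(a+1), z y) = 0 := by
    intro a
    rw [hzper.intervalIntegral_add_eq a 0]
    simpa using hzint
  have hex : ∃ x₀ ∈ Icc (x₁ - 1) x₁, z x₀ = 0 := by
    by_contra hcon
    push_neg at hcon
    have hab : x₁ - 1 < x₁ := by linarith
    have hsign : (∀ x ∈ Icc (x₁-1) x₁, 0 < z x) ∨ (∀ x ∈ Icc (x₁-1) x₁, z x < 0) := by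
      rcases lt_or_gt_of_ne (hcon x₁ ⟨hab.le, le_rfl⟩) with hneg | hpos
      · right
        intro x hx
        rcases lt_or_gt_of_ne (hcon x hx) with h' | h'
        · exact h'
        · exfalso
          have h0 : (0:ℝ) ∈ uIcc (z x₁) (z x) := by
            rw [Set.mem_uIcc]; left; exact ⟨hneg.le, h'.le⟩
          obtain ⟨y, hy, hyz⟩ := intermediate_value_uIcc
            (hz.continuousOn (s := uIcc x₁ x)) h0
          exact hcon y ((uIcc_subset_Icc ⟨hab.le, le_rfl⟩ hx) hy) hyz
      · left
        intro x hx
        rcases lt_or_gt_of_ne (hcon x hx) with h' | h'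
        · exfalso
          have h0 : (0:ℝ) ∈ uIcc (z x₁) (z x) := by
            rw [Set.mem_uIcc]; right; exact ⟨h'.le, hpos.le⟩
          obtain ⟨y, hy, hyz⟩ := intermediate_value_uIcc
            (hz.continuousOn (s := uIcc x₁ x)) h0
          exact hcon y ((uIcc_subset_Icc ⟨hab.le, le_rfl⟩ hx) hy) hyz
        · exact h'
    have hint : (∫ y in (x₁-1)..x₁, z y) = 0 := by
      have := hintper (x₁ - 1); rwa [sub_add_cancel] at this
    rcases hsign with hpos | hneg
    · have := intervalIntegral.intervalIntegral_pos_of_pos_on (hz.intervalIntegrable _ _)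
        (fun x hx => hpos x (Ioo_subset_Icc_self hx)) hab
      rw [hint] at this; exact lt_irrefl 0 this
    · have := intervalIntegral.intervalIntegral_pos_of_pos_on ((hz.neg).intervalIntegrable _ _)
        (fun x hx => by simpa using (hneg x (Ioo_subset_Icc_self hx))) hab
      simp only [Pi.neg_apply] at this
      rw [intervalIntegral.integral_neg, hint] at this
      simp at this
  obtain ⟨x₀, hx₀mem, hx₀⟩ := hex
  have hg0 : g x₀ = 0 := by simp [hgdef, hx₀]
  have hznn : ∀ x ∈ Icc x₀ (x₀+1), 0 ≤ z x := by
    intro x hx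
    have : (0:ℝ) ≤ g x := by rw [← hg0]; exact hgmono hx.1
    exact (mul_nonneg_iff_of_pos_right (Real.exp_pos _)).mp this
  set Z : ℝ → ℝ := fun x => ∫ t in x₀..x, z t with hZdef
  have hZd : ∀ x, HasDerivAt Z (z x) x := fun x =>
    intervalIntegral.integral_hasDerivAt_right (hz.intervalIntegrable _ _)
      (hz.stronglyMeasurableAtFilter _ _) hz.continuousAt
  have hZmono : MonotoneOn Z (Icc x₀ (x₀+1)) := by
    refine monotoneOn_of_deriv_nonneg (convex_Icc _ _)
      (fun x _ => ((hZd x).continuousAt.continuousWithinAt))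
      (fun x hx => ((hZd x).differentiableAt.differentiableWithinAt)) (fun x hx => ?_)
    rw [interior_Icc] at hx
    rw [(hZd x).deriv]
    exact hznn x (Ioo_subset_Icc_self hx)
  have hZ0 : Z x₀ = 0 := intervalIntegral.integral_same
  have hZ1 : Z (x₀+1) = 0 := hintper x₀
  have hZzero : ∀ x ∈ Icc x₀ (x₀+1), Z x = 0 := by
    intro x hx
    have h1 : Z x₀ ≤ Z x := hZmono (left_mem_Icc.mpr (by linarith [hx.1, hx.2])) hx hx.1
    have h2 : Z x ≤ Z (x₀+1) := hZmono hx (right_mem_Icc.mpr (by linarith)) hx.2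
    rw [hZ0] at h1; rw [hZ1] at h2; linarith
  have hzzero : ∀ x ∈ Icc x₀ (x₀+1), z x = 0 := by
    intro x hx
    rcases eq_or_lt_of_le hx.1 with h1 | h1
    · rw [← h1]; exact hx₀
    rcases eq_or_lt_of_le hx.2 with h2 | h2
    · rw [h2, hzper]; exact hx₀
    have hnbhd : Icc x₀ (x₀+1) ∈ 𝓝 x := Icc_mem_nhds h1 h2
    have hev : Z =ᶠ[𝓝 x] (fun _ => 0) := by
      filter_upwards [hnbhd] with y hy using hZzero y hy
    have : HasDerivAt Z 0 x := (hasDerivAt_const x (0:ℝ)).congr_of_eventuallyEq hev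
    exact ((hZd x).unique this)
  have hzall : ∀ x, z x = 0 := by
    intro x
    have hfr := Int.fract_nonneg (x - x₀)
    have hfr1 := Int.fract_lt_one (x - x₀)
    have heq : x - (⌊x - x₀⌋ : ℝ) = x₀ + Int.fract (x - x₀) := by
      rw [Int.fract]; ring
    have hmem : x - (⌊x - x₀⌋ : ℝ) ∈ Icc x₀ (x₀+1) := by
      rw [heq]; constructor <;> [linarith; linarith]
    have := hzper.sub_int_mul_eq (x := x) ⌊x - x₀⌋
    rw [mul_one] at this
    rw [← this]
    exact hzzero _ hmem
  have hgzero : g = fun _ => 0 := by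
    funext y; simp [hgdef, hzall y]
  have hgd0 : HasDerivAt g 0 x₁ := by
    rw [hgzero]; exact hasDerivAt_const _ _
  have huniq := (hgd x₁).unique hgd0
  have hpos : 0 < h x₁ * Real.exp (-B x₁) := mul_pos hx₁ (Real.exp_pos _)
  rw [huniq] at hpos
  exact lt_irrefl 0 hpos

/-- convexity of the homogenized flux.  If `A(y,·)` is convex for
every `y` and `u`, `v₁`, `v₂` are periodic stationary solutions with constants
`c`, `c₁`, `c₂` whose means satisfy `⟨u⟩ = λ⟨v₁⟩ + (1−λ)⟨v₂⟩`, then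
`c ≤ λc₁ + (1−λ)c₂`; with strict inequality if `A(y,·)` is strictly convex and
`⟨v₁⟩ ≠ ⟨v₂⟩`. -/
theorem homogenized_flux_convex
    (A : ℝ → ℝ → ℝ)
    (hA : ContDiff ℝ 1 (Function.uncurry A))
    (hper : ∀ y v, A (y + 1) v = A y v)
    (hconv : ∀ y, ConvexOn ℝ Set.univ (fun v => A y v))
    (lam : ℝ) (hlam : lam ∈ Set.Ioo (0:ℝ) 1)
    (c₁ c₂ c : ℝ) (v₁ v₂ u : ℝ → ℝ)
    (hv₁ : ContDiff ℝ 1 v₁) (hv₁per : ∀ x, v₁ (x + 1) = v₁ x)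
    (hv₁ode : ∀ x, deriv v₁ x = A x (v₁ x) - c₁)
    (hv₂ : ContDiff ℝ 1 v₂) (hv₂per : ∀ x, v₂ (x + 1) = v₂ x)
    (hv₂ode : ∀ x, deriv v₂ x = A x (v₂ x) - c₂)
    (hu : ContDiff ℝ 1 u) (huper : ∀ x, u (x + 1) = u x)
    (huode : ∀ x, deriv u x = A x (u x) - c)
    (hmean : (∫ y in (0:ℝ)..1, u y)
      = lam * (∫ y in (0:ℝ)..1, v₁ y) + (1 - lam) * ∫ y in (0:ℝ)..1, v₂ y) :
    c ≤ lam * c₁ + (1 - lam) * c₂ ∧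
    ((∀ y, StrictConvexOn ℝ Set.univ (fun v => A y v)) →
      (∫ y in (0:ℝ)..1, v₁ y) ≠ (∫ y in (0:ℝ)..1, v₂ y) →
      c < lam * c₁ + (1 - lam) * c₂) := by
  obtain ⟨hlam0, hlam1⟩ := hlam
  have hlam1' : (0:ℝ) < 1 - lam := by linarith
  have hcu : Continuous u := hu.continuous
  have hcv₁ : Continuous v₁ := hv₁.continuous
  have hcv₂ : Continuous v₂ := hv₂.continuous
  set z : ℝ → ℝ := fun x => lam * v₁ x + (1 - lam) * v₂ x - u x with hzdef
  have hcz : Continuous z := ((continuous_const.mul hcv₁).add (continuous_const.mul hcv₂)).sub hcu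
  have hzper : Function.Periodic z 1 := by
    intro x; simp only [hzdef, hv₁per, hv₂per, huper]
  have hzint : (∫ y in (0:ℝ)..1, z y) = 0 := by
    have h1 : (∫ y in (0:ℝ)..1, z y)
        = lam * (∫ y in (0:ℝ)..1, v₁ y) + (1-lam) * (∫ y in (0:ℝ)..1, v₂ y)
          - ∫ y in (0:ℝ)..1, u y := by
      rw [show (∫ y in (0:ℝ)..1, z y)
          = ∫ y in (0:ℝ)..1, (lam * v₁ y + (1 - lam) * v₂ y - u y) from rfl,
        intervalIntegral.integral_sub
          (((hcv₁.intervalIntegrable _ _).const_mul lam).add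
            ((hcv₂.intervalIntegrable _ _).const_mul (1-lam)))
          (hcu.intervalIntegrable _ _),
        intervalIntegral.integral_add ((hcv₁.intervalIntegrable _ _).const_mul lam)
          ((hcv₂.intervalIntegrable _ _).const_mul (1-lam)),
        intervalIntegral.integral_const_mul, intervalIntegral.integral_const_mul]
    rw [h1, hmean]; ring
  -- derivative of z
  have hud : ∀ x, HasDerivAt u (A x (u x) - c) x := fun x => by
    rw [← huode x]; exact (hu.differentiable one_ne_zero x).hasDerivAt
  have hv₁d : ∀ x, HasDerivAt v₁ (A x (v₁ x) - c₁) x := fun x => by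
    rw [← hv₁ode x]; exact (hv₁.differentiable one_ne_zero x).hasDerivAt
  have hv₂d : ∀ x, HasDerivAt v₂ (A x (v₂ x) - c₂) x := fun x => by
    rw [← hv₂ode x]; exact (hv₂.differentiable one_ne_zero x).hasDerivAt
  have hzd : ∀ x, HasDerivAt z
      (lam * (A x (v₁ x) - c₁) + (1-lam) * (A x (v₂ x) - c₂) - (A x (u x) - c)) x :=
    fun x => (((hv₁d x).const_mul lam).add ((hv₂d x).const_mul (1-lam))).sub (hud x)
  -- the partial derivative of A in its second variable
  set A₂ : ℝ → ℝ → ℝ := fun x v => fderiv ℝ (Function.uncurry A) (x, v) (0, 1) with hA₂def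
  have hA₂cont : Continuous (fun p : ℝ × ℝ => A₂ p.1 p.2) := by
    have h1 : Continuous (fun p : ℝ × ℝ => fderiv ℝ (Function.uncurry A) p) :=
      hA.continuous_fderiv one_ne_zero
    exact h1.clm_apply continuous_const
  have hAd : ∀ x v, HasDerivAt (fun v => A x v) (A₂ x v) v := by
    intro x v
    have hdiff : DifferentiableAt ℝ (Function.uncurry A) (x, v) :=
      (hA.differentiable one_ne_zero).differentiableAt
    have hline : HasDerivAt (fun t : ℝ => ((x, t) : ℝ × ℝ)) (0, 1) v :=
      (hasDerivAt_const v x).prodMk (hasDerivAt_id v)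
    exact hdiff.hasFDerivAt.comp_hasDerivAt v hline
  set b : ℝ → ℝ := fun x => ∫ t in (0:ℝ)..1, A₂ x (u x + t * z x) with hbdef
  have hbcont : Continuous b := by
    apply intervalIntegral.continuous_parametric_intervalIntegral_of_continuous'
      (f := fun x t => A₂ x (u x + t * z x)) (μ := volume)
    have : Continuous (fun p : ℝ × ℝ => A₂ p.1 (u p.1 + p.2 * z p.1)) :=
      hA₂cont.comp (continuous_fst.prodMk ((hcu.comp continuous_fst).add
        (continuous_snd.mul (hcz.comp continuous_fst))))
    exact this
  have hbz : ∀ x, A x (lam * v₁ x + (1 - lam) * v₂ x) - A x (u x) = b x * z x := by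
    intro x
    have hderiv : ∀ t ∈ uIcc (0:ℝ) 1, HasDerivAt (fun t => A x (u x + t * z x))
        (A₂ x (u x + t * z x) * z x) t := by
      intro t _
      have hlin : HasDerivAt (fun t : ℝ => u x + t * z x) (z x) t := by
        simpa using (hasDerivAt_id t).mul_const (z x) |>.const_add (u x)
      exact (hAd x (u x + t * z x)).comp t hlin
    have hcontint : Continuous (fun t => A₂ x (u x + t * z x) * z x) := by
      apply Continuous.mul _ continuous_const
      exact hA₂cont.comp (continuous_const.prodMk (continuous_const.add
        (continuous_id.mul continuous_const)))
    have := intervalIntegral.integral_eq_sub_of_hasDerivAt hderiv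
      (hcontint.intervalIntegrable _ _)
    simp only [one_mul, zero_mul, add_zero] at this
    rw [intervalIntegral.integral_mul_const] at this
    rw [show u x + z x = lam * v₁ x + (1 - lam) * v₂ x by simp only [hzdef]; ring] at this
    rw [← this]
  set B : ℝ → ℝ := fun x => ∫ s in (0:ℝ)..x, b s with hBdef
  have hBd : ∀ x, HasDerivAt B (b x) x := fun x =>
    intervalIntegral.integral_hasDerivAt_right (hbcont.intervalIntegrable _ _)
      (hbcont.stronglyMeasurableAtFilter _ _) hbcont.continuousAt
  set cbar : ℝ := lam * c₁ + (1 - lam) * c₂ with hcbardef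
  set h : ℝ → ℝ := fun x =>
    (lam * A x (v₁ x) + (1 - lam) * A x (v₂ x) - A x (lam * v₁ x + (1 - lam) * v₂ x))
      + (c - cbar) with hhdef
  have hgd : ∀ x, HasDerivAt (fun x => z x * Real.exp (-B x))
      (h x * Real.exp (-B x)) x := by
    intro x
    have hexp : HasDerivAt (fun x => Real.exp (-B x))
        (Real.exp (-B x) * (-(b x))) x := ((hBd x).neg).exp
    have hmul := (hzd x).mul hexp
    have hval : (lam * (A x (v₁ x) - c₁) + (1-lam) * (A x (v₂ x) - c₂) - (A x (u x) - c))
          * Real.exp (-B x) + z x * (Real.exp (-B x) * (-(b x)))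
        = h x * Real.exp (-B x) := by
      have h1 := hbz x
      simp only [hhdef, hcbardef]
      nlinarith [h1, Real.exp_pos (-B x)]
    rw [hval] at hmul
    exact hmul
  -- convexity: the defect is nonneg
  have hδ : ∀ x, 0 ≤ lam * A x (v₁ x) + (1 - lam) * A x (v₂ x)
      - A x (lam * v₁ x + (1 - lam) * v₂ x) := by
    intro x
    have := (hconv x).2 (Set.mem_univ (v₁ x)) (Set.mem_univ (v₂ x))
      hlam0.le hlam1'.le (by ring)
    simp only [smul_eq_mul] at this
    linarith
  constructor
  · by_contra hc
    push_neg at hc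
    refine no_monotone_aux z B h hcz hzper hzint hgd (fun x => ?_) 0 ?_
    · have := hδ x; simp only [hhdef]; linarith
    · have := hδ 0; simp only [hhdef]; linarith
  · intro hstrict hne
    by_contra hc
    push_neg at hc
    have hx₁ : ∃ x₁, v₁ x₁ ≠ v₂ x₁ := by
      by_contra hall
      push_neg at hall
      exact hne (intervalIntegral.integral_congr (fun x _ => hall x))
    obtain ⟨x₁, hx₁⟩ := hx₁
    have hstrictx : A x₁ (lam * v₁ x₁ + (1 - lam) * v₂ x₁)
        < lam * A x₁ (v₁ x₁) + (1 - lam) * A x₁ (v₂ x₁) := by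
      have := (hstrict x₁).2 (Set.mem_univ (v₁ x₁)) (Set.mem_univ (v₂ x₁))
        hx₁ hlam0 hlam1' (by ring)
      simpa only [smul_eq_mul] using this
    refine no_monotone_aux z B h hcz hzper hzint hgd (fun x => ?_) x₁ ?_
    · have := hδ x; simp only [hhdef]; linarith
    · simp only [hhdef]; linarith
end
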